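/- Let α1, β1, α2, β2 > 0 and let U ~ Beta(α1,β1) and V ~ Beta(α2,β2) be independent. Then R = V/U has a density f on (0,∞) given by: for 0 < R ≤ 1, f(R) = R^{α2-1}/(B(α1,β1)B(α2,β2)) · ∫₀¹ u^{α1+α2-1}(1-u)^{β1-1}(1-Ru)^{β2-1} du; and for R > 1, f(R) = R^{-(α1+1)}/(B(α1,β1)B(α2,β2)) · ∫₀¹ v^{α1+α2-1}(1-v)^{β2-1}(1-v/R)^{β1-1} dv. -/

import Mathlib

open MeasureTheory ProbabilityTheory

/-- The Beta function `B(a,b) = Γ(a)Γ(b)/Γ(a+b)`. -/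
noncomputable def betaFn (a b : ℝ) : ℝ := Real.Gamma a * Real.Gamma b / Real.Gamma (a + b)

/-- The law of a `Beta(a,b)` random variable: density `x^{a-1}(1-x)^{b-1}/B(a,b)`
on `(0,1)` with respect to Lebesgue measure. -/
noncomputable def betaLaw (a b : ℝ) : Measure ℝ :=
  volume.withDensity (fun x => ENNReal.ofReal
    (Set.indicator (Set.Ioo (0 : ℝ) 1) (fun t => t ^ (a - 1) * (1 - t) ^ (b - 1) / betaFn a b) x))

section Aux
open Set ENNReal

lemma betaFn_pos {a b : ℝ} (ha : 0 < a) (hb : 0 < b) : 0 < betaFn a b :=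
  div_pos (mul_pos (Real.Gamma_pos_of_pos ha) (Real.Gamma_pos_of_pos hb))
    (Real.Gamma_pos_of_pos (by linarith))

lemma integrableOn_rpow_mul_rpow {p q : ℝ} (hp : -1 < p) (hq : -1 < q) :
    IntegrableOn (fun u : ℝ => u ^ p * (1 - u) ^ q) (Set.Ioo 0 1) := by
  have h := Complex.betaIntegral_convergent (u := ((p+1:ℝ):ℂ)) (v := ((q+1:ℝ):ℂ))
    (by simp; linarith) (by simp; linarith)
  rw [intervalIntegrable_iff, uIoc_of_le (by norm_num : (0:ℝ) ≤ 1)] at h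
  have h1 : IntegrableOn (fun x : ℝ => ‖(x:ℂ) ^ (((p+1:ℝ):ℂ) - 1) * ((1:ℂ)-(x:ℂ)) ^ (((q+1:ℝ):ℂ) - 1)‖) (Ioc 0 1) volume := h.norm
  have h2 : IntegrableOn (fun x : ℝ => ‖(x:ℂ) ^ (((p+1:ℝ):ℂ) - 1) * ((1:ℂ)-(x:ℂ)) ^ (((q+1:ℝ):ℂ) - 1)‖) (Ioo 0 1) volume := h1.mono_set Ioo_subset_Ioc_self
  refine h2.congr_fun (fun x hx => ?_) measurableSet_Ioo
  have hx0 : (0:ℝ) ≤ x := hx.1.le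
  have hx1 : (0:ℝ) ≤ 1 - x := by linarith [hx.2]
  have e1 : ((x:ℂ)) ^ (((p+1:ℝ):ℂ) - 1) = ((x ^ p : ℝ) : ℂ) := by
    rw [Complex.ofReal_cpow hx0]
    norm_num
  have e2 : ((1:ℂ) - (x:ℂ)) ^ (((q+1:ℝ):ℂ) - 1) = (((1 - x) ^ q : ℝ) : ℂ) := by
    rw [show ((1:ℂ) - (x:ℂ)) = (((1:ℝ) - x : ℝ) : ℂ) by push_cast; ring,
      Complex.ofReal_cpow hx1]
    norm_num
  simp only [e1, e2, ← Complex.ofReal_mul, Complex.norm_real]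
  rw [Real.norm_eq_abs, abs_of_nonneg (mul_nonneg (Real.rpow_nonneg hx0 _) (Real.rpow_nonneg hx1 _))]

lemma rpow_le_max {a x e : ℝ} (ha : 0 < a) (hax : a ≤ x) (hx1 : x ≤ 1) :
    x ^ e ≤ max (a ^ e) 1 := by
  rcases le_or_gt 0 e with he | he
  · exact le_max_of_le_right (Real.rpow_le_one (by linarith) hx1 he)
  · exact le_max_of_le_left (Real.rpow_le_rpow_of_nonpos ha hax he.le)

noncomputable def braw (a b : ℝ) (t : ℝ) : ℝ := t ^ (a - 1) * (1 - t) ^ (b - 1) / betaFn a b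

section Alg
variable {α1 β1 α2 β2 : ℝ}

lemma rpow_combine {u : ℝ} (hu : 0 < u) :
    u ^ (α1 - 1) * u * u ^ (α2 - 1) = u ^ (α1 + α2 - 1) := by
  rw [show u ^ (α1-1) * u * u ^ (α2-1) = u^(α1-1) * u^(α2-1) * u^(1:ℝ) by
      rw [Real.rpow_one]; ring,
    ← Real.rpow_add hu, ← Real.rpow_add hu]
  ring_nf

lemma algebra1 {u R : ℝ} (hu : 0 < u) (hR : 0 < R) :
    braw α1 β1 u * u * braw α2 β2 (u * R)
      = R ^ (α2 - 1) / (betaFn α1 β1 * betaFn α2 β2) *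
        (u ^ (α1 + α2 - 1) * (1 - u) ^ (β1 - 1) * (1 - R * u) ^ (β2 - 1)) := by
  unfold braw
  rw [Real.mul_rpow hu.le hR.le, ← rpow_combine (α1 := α1) (α2 := α2) hu, mul_comm u R]
  ring

lemma algebra2 {v R : ℝ} (hv : 0 < v) (hR : 0 < R) :
    R ^ (α2 - 1) / (betaFn α1 β1 * betaFn α2 β2) *
        ((v/R) ^ (α1 + α2 - 1) * (1 - v/R) ^ (β1 - 1) * (1 - R * (v/R)) ^ (β2 - 1))
      = (R * (R ^ (-(α1 + 1)) / (betaFn α1 β1 * betaFn α2 β2))) *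
        (v ^ (α1 + α2 - 1) * (1 - v) ^ (β2 - 1) * (1 - v / R) ^ (β1 - 1)) := by
  rw [mul_div_cancel₀ _ hR.ne', Real.div_rpow hv.le hR.le]
  have e2' : R ^ (α2 - 1) = R * R ^ (-(α1 + 1)) * R ^ (α1 + α2 - 1) := by
    rw [mul_assoc, ← Real.rpow_add hR, show R * R ^ (-(α1+1) + (α1+α2-1)) =
      R ^ (1:ℝ) * R ^ (-(α1+1) + (α1+α2-1)) by rw [Real.rpow_one], ← Real.rpow_add hR]
    ring_nf
  have hC : R ^ (α1 + α2 - 1) ≠ 0 := (Real.rpow_pos_of_pos hR _).ne'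
  rw [e2', div_mul_eq_mul_div, mul_comm (R * R ^ (-(α1+1))) (R ^ (α1+α2-1)),
    mul_assoc (R ^ (α1+α2-1))]
  rw [show (v ^ (α1+α2-1) / R ^ (α1+α2-1) * (1 - v/R) ^ (β1-1) * (1 - v) ^ (β2-1))
      = (R ^ (α1+α2-1))⁻¹ * (v ^ (α1+α2-1) * (1 - v/R) ^ (β1-1) * (1 - v) ^ (β2-1)) by ring]
  rw [show R ^ (α1+α2-1) *
        (R * R ^ (-(α1+1)) *
          ((R ^ (α1+α2-1))⁻¹ * (v ^ (α1+α2-1) * (1 - v / R) ^ (β1-1) * (1 - v) ^ (β2-1))))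
      = (R ^ (α1+α2-1) * (R ^ (α1+α2-1))⁻¹) *
        (R * R ^ (-(α1+1)) * (v ^ (α1+α2-1) * (1 - v / R) ^ (β1-1) * (1 - v) ^ (β2-1))) by ring,
    mul_inv_cancel₀ hC, one_mul]
  ring
end Alg

noncomputable def bd (a b : ℝ) : ℝ → ℝ := (Set.Ioo (0:ℝ) 1).indicator (braw a b)

lemma braw_nonneg_on {a b : ℝ} (ha : 0 < a) (hb : 0 < b) {t : ℝ} (ht : t ∈ Set.Ioo (0:ℝ) 1) :
    0 ≤ braw a b t := by
  have h1 : (0:ℝ) < t := ht.1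
  have h2 : (0:ℝ) < 1 - t := by linarith [ht.2]
  exact div_nonneg (mul_nonneg (Real.rpow_nonneg h1.le _) (Real.rpow_nonneg h2.le _))
    (betaFn_pos ha hb).le

lemma measurable_braw (a b : ℝ) : Measurable (braw a b) := by
  unfold braw; fun_prop

lemma measurable_bd (a b : ℝ) : Measurable (bd a b) :=
  (measurable_braw a b).indicator measurableSet_Ioo

noncomputable def dens (α1 β1 α2 β2 : ℝ) (R : ℝ) : ℝ≥0∞ :=
  ∫⁻ u, ENNReal.ofReal (bd α1 β1 u) * ENNReal.ofReal u * ENNReal.ofReal (bd α2 β2 (u * R))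

section Dens
variable {α1 β1 α2 β2 : ℝ} (hα1 : 0 < α1) (hβ1 : 0 < β1) (hα2 : 0 < α2) (hβ2 : 0 < β2)
include hα1 hβ1 hα2 hβ2

lemma dens_eq {R : ℝ} (hR1 : R ≠ 1) :
    dens α1 β1 α2 β2 R = ENNReal.ofReal
      (Set.indicator (Set.Ioi (0 : ℝ))
          (fun R =>
            if R ≤ 1 then
              R ^ (α2 - 1) / (betaFn α1 β1 * betaFn α2 β2) *
                ∫ u in Set.Ioo (0 : ℝ) 1,
                  u ^ (α1 + α2 - 1) * (1 - u) ^ (β1 - 1) * (1 - R * u) ^ (β2 - 1)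
            else
              R ^ (-(α1 + 1)) / (betaFn α1 β1 * betaFn α2 β2) *
                ∫ v in Set.Ioo (0 : ℝ) 1,
                  v ^ (α1 + α2 - 1) * (1 - v) ^ (β2 - 1) * (1 - v / R) ^ (β1 - 1)) R) := by
  have hB : 0 < betaFn α1 β1 * betaFn α2 β2 := mul_pos (betaFn_pos hα1 hβ1) (betaFn_pos hα2 hβ2)
  by_cases hR : 0 < R
  swap
  · -- R ≤ 0 : both sides vanish
    rw [Set.indicator_of_notMem (by simpa using hR), ENNReal.ofReal_zero]
    unfold dens
    rw [← lintegral_zero]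
    refine lintegral_congr fun u => ?_
    by_cases hu : u ∈ Set.Ioo (0:ℝ) 1
    · have : u * R ∉ Set.Ioo (0:ℝ) 1 := by
        intro h
        push_neg at hR
        exact absurd h.1 (by nlinarith [mul_nonpos_of_nonneg_of_nonpos hu.1.le hR])
      simp [bd, Set.indicator_of_notMem this]
    · simp [bd, Set.indicator_of_notMem hu]
  · -- R > 0
    have step1 : dens α1 β1 α2 β2 R
        = ∫⁻ u in Set.Ioo (0:ℝ) 1, ENNReal.ofReal (braw α1 β1 u * u * bd α2 β2 (u * R)) := by
      unfold dens
      rw [← lintegral_indicator measurableSet_Ioo]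
      refine lintegral_congr fun u => ?_
      by_cases hu : u ∈ Set.Ioo (0:ℝ) 1
      · rw [Set.indicator_of_mem hu, bd, Set.indicator_of_mem hu,
          ← ENNReal.ofReal_mul (braw_nonneg_on hα1 hβ1 hu),
          ← ENNReal.ofReal_mul (mul_nonneg (braw_nonneg_on hα1 hβ1 hu) hu.1.le)]
      · simp [bd, Set.indicator_of_notMem hu]
    rw [step1, Set.indicator_of_mem (Set.mem_Ioi.mpr hR)]
    by_cases hR2 : R ≤ 1
    · -- 0 < R < 1
      have hRlt : R < 1 := lt_of_le_of_ne hR2 hR1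
      rw [if_pos hR2]
      set c : ℝ := R ^ (α2 - 1) / (betaFn α1 β1 * betaFn α2 β2) with hc
      set k : ℝ → ℝ := fun u => u ^ (α1 + α2 - 1) * (1 - u) ^ (β1 - 1) * (1 - R * u) ^ (β2 - 1)
        with hk
      have hEq : ∀ u ∈ Set.Ioo (0:ℝ) 1, braw α1 β1 u * u * bd α2 β2 (u * R) = c * k u := by
        intro u hu
        have hmem : u * R ∈ Set.Ioo (0:ℝ) 1 :=
          ⟨mul_pos hu.1 hR, by nlinarith [hu.1, hu.2]⟩
        rw [bd, Set.indicator_of_mem hmem, algebra1 hu.1 hR]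
      have hIk : IntegrableOn k (Set.Ioo (0:ℝ) 1) := by
        have hC := integrableOn_rpow_mul_rpow (p := α1 + α2 - 1) (q := β1 - 1)
          (by linarith) (by linarith)
        refine Integrable.mono' (hC.const_mul (max ((1 - R) ^ (β2 - 1)) 1)) ?_ ?_
        · apply Measurable.aestronglyMeasurable
          fun_prop
        · rw [ae_restrict_iff' measurableSet_Ioo]
          refine Filter.Eventually.of_forall fun u hu => ?_
          have h1 : (0:ℝ) < u := hu.1
          have h2 : (0:ℝ) < 1 - u := by linarith [hu.2]
          have h3 : (0:ℝ) < 1 - R * u := by nlinarith [hu.2]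
          have hb : (1 - R * u) ^ (β2 - 1) ≤ max ((1 - R) ^ (β2 - 1)) 1 :=
            rpow_le_max (by linarith) (by nlinarith) (by nlinarith)
          rw [Real.norm_eq_abs, abs_of_nonneg (by positivity)]
          calc u ^ (α1 + α2 - 1) * (1 - u) ^ (β1 - 1) * (1 - R * u) ^ (β2 - 1)
              ≤ u ^ (α1 + α2 - 1) * (1 - u) ^ (β1 - 1) * max ((1 - R) ^ (β2 - 1)) 1 :=
                mul_le_mul_of_nonneg_left hb (by positivity)
            _ = max ((1 - R) ^ (β2 - 1)) 1 * (u ^ (α1 + α2 - 1) * (1 - u) ^ (β1 - 1)) := by ring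
      have hIck : IntegrableOn (fun u => c * k u) (Set.Ioo (0:ℝ) 1) := hIk.const_mul c
      rw [setLIntegral_congr_fun measurableSet_Ioo (
        fun u hu => by rw [hEq u hu]),
        ← ofReal_integral_eq_lintegral_ofReal hIck ?_]
      · rw [integral_const_mul]
      · rw [Filter.EventuallyLE, ae_restrict_iff' measurableSet_Ioo]
        refine Filter.Eventually.of_forall fun u hu => ?_
        have h1 : (0:ℝ) < u := hu.1
        have h2 : (0:ℝ) < 1 - u := by linarith [hu.2]
        have h3 : (0:ℝ) < 1 - R * u := by nlinarith [hu.2]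
        have hc0 : 0 ≤ c := by rw [hc]; positivity
        simp only [Pi.zero_apply]
        positivity
    · -- R > 1
      push_neg at hR2
      rw [if_neg (not_le.mpr hR2)]
      have hR0 : (0:ℝ) < R := hR
      have hinv : (0:ℝ) < 1 / R := by positivity
      have hinv1 : 1 / R < 1 := by rw [div_lt_one hR0]; exact hR2
      set c3 : ℝ := R ^ (α2 - 1) / (betaFn α1 β1 * betaFn α2 β2) with hc3
      set c2 : ℝ := R ^ (-(α1 + 1)) / (betaFn α1 β1 * betaFn α2 β2) with hc2
      set k1 : ℝ → ℝ := fun u => u ^ (α1 + α2 - 1) * (1 - u) ^ (β1 - 1) * (1 - R * u) ^ (β2 - 1)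
        with hk1
      set k2 : ℝ → ℝ := fun v => v ^ (α1 + α2 - 1) * (1 - v) ^ (β2 - 1) * (1 - v / R) ^ (β1 - 1)
        with hk2
      -- shrink the domain to Ioo 0 (1/R)
      have shrink : ∫⁻ u in Set.Ioo (0:ℝ) 1, ENNReal.ofReal (braw α1 β1 u * u * bd α2 β2 (u * R))
          = ∫⁻ u in Set.Ioo (0:ℝ) (1/R),
              ENNReal.ofReal (braw α1 β1 u * u * bd α2 β2 (u * R)) := by
        rw [← lintegral_indicator measurableSet_Ioo, ← lintegral_indicator measurableSet_Ioo]
        refine lintegral_congr fun u => ?_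
        by_cases hu : u ∈ Set.Ioo (0:ℝ) (1/R)
        · rw [Set.indicator_of_mem (Set.mem_Ioo.mpr ⟨hu.1, lt_trans hu.2 hinv1⟩), Set.indicator_of_mem hu]
        · by_cases hu1 : u ∈ Set.Ioo (0:ℝ) 1
          · have hge : 1 ≤ u * R := by
              have : 1/R ≤ u := by
                by_contra hcon
                exact hu ⟨hu1.1, by linarith [not_le.mp hcon]⟩
              calc (1:ℝ) = (1/R) * R := by field_simp
                _ ≤ u * R := by nlinarith
            have : u * R ∉ Set.Ioo (0:ℝ) 1 := fun h => absurd h.2 (not_lt.mpr hge)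
            rw [Set.indicator_of_mem hu1, Set.indicator_of_notMem hu, bd,
              Set.indicator_of_notMem this]
            simp
          · rw [Set.indicator_of_notMem hu, Set.indicator_of_notMem hu1]
      rw [shrink]
      have hEq : ∀ u ∈ Set.Ioo (0:ℝ) (1/R),
          braw α1 β1 u * u * bd α2 β2 (u * R) = c3 * k1 u := by
        intro u hu
        have hmem : u * R ∈ Set.Ioo (0:ℝ) 1 :=
          ⟨mul_pos hu.1 hR0, by rw [← lt_div_iff₀ hR0]; exact hu.2⟩
        rw [bd, Set.indicator_of_mem hmem, algebra1 hu.1 hR0]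
      -- integrability on Ioo 0 (1/R)
      have hbase : IntegrableOn (fun v => v ^ (α1 + α2 - 1) * (1 - v) ^ (β2 - 1))
          (Set.Ioo (0:ℝ) 1) := integrableOn_rpow_mul_rpow (by linarith) (by linarith)
      have hbaseI : IntervalIntegrable (fun v => v ^ (α1 + α2 - 1) * (1 - v) ^ (β2 - 1))
          volume 0 1 := by
        rw [intervalIntegrable_iff, uIoc_of_le (by norm_num : (0:ℝ) ≤ 1)]
        exact Iff.mpr integrableOn_Ioc_iff_integrableOn_Ioo hbase
      have hcomp : IntegrableOn (fun u => (R*u) ^ (α1 + α2 - 1) * (1 - R*u) ^ (β2 - 1))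
          (Set.Ioo (0:ℝ) (1/R)) := by
        have h2 := hbaseI.comp_mul_left (c := R)
        rw [zero_div, intervalIntegrable_iff, uIoc_of_le (by positivity : (0:ℝ) ≤ 1/R)] at h2
        exact Iff.mp integrableOn_Ioc_iff_integrableOn_Ioo h2
      have hIk1 : IntegrableOn (fun u => c3 * k1 u) (Set.Ioo (0:ℝ) (1/R)) := by
        set C1 : ℝ := max ((1 - 1/R) ^ (β1 - 1)) 1 with hC1
        refine Integrable.mono'
          ((hcomp.const_mul (|c3| * R ^ (-(α1 + α2 - 1)) * C1))) ?_ ?_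
        · apply Measurable.aestronglyMeasurable; fun_prop
        · rw [ae_restrict_iff' measurableSet_Ioo]
          refine Filter.Eventually.of_forall fun u hu => ?_
          have h1 : (0:ℝ) < u := hu.1
          have h2u : u < 1/R := hu.2
          have h2 : (0:ℝ) < 1 - u := by nlinarith
          have h3 : (0:ℝ) < 1 - R * u := by nlinarith [(lt_div_iff₀ hR0).mp h2u]
          have hup : u ^ (α1 + α2 - 1) = R ^ (-(α1 + α2 - 1)) * (R*u) ^ (α1 + α2 - 1) := by
            rw [Real.mul_rpow hR0.le h1.le, ← mul_assoc, ← Real.rpow_add hR0]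
            simp
          have hbnd : (1 - u) ^ (β1 - 1) ≤ C1 :=
            rpow_le_max (by linarith) (by linarith) (by linarith)
          rw [Real.norm_eq_abs, abs_mul, hk1]
          have hk1nn : (0:ℝ) ≤ u ^ (α1 + α2 - 1) * (1 - u) ^ (β1 - 1) * (1 - R * u) ^ (β2 - 1) :=
            by positivity
          rw [abs_of_nonneg hk1nn]
          calc |c3| * (u ^ (α1 + α2 - 1) * (1 - u) ^ (β1 - 1) * (1 - R * u) ^ (β2 - 1))
              = |c3| * (R ^ (-(α1 + α2 - 1)) * (R*u) ^ (α1 + α2 - 1) * (1 - u) ^ (β1 - 1)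
                  * (1 - R * u) ^ (β2 - 1)) := by rw [← hup]
            _ ≤ |c3| * (R ^ (-(α1 + α2 - 1)) * (R*u) ^ (α1 + α2 - 1) * C1
                  * (1 - R * u) ^ (β2 - 1)) := by
                have h01 : (0:ℝ) ≤ (R*u) ^ (α1 + α2 - 1) := by positivity
                have h02 : (0:ℝ) ≤ R ^ (-(α1 + α2 - 1)) := by positivity
                have h03 : (0:ℝ) ≤ (1 - R * u) ^ (β2 - 1) := by positivity
                apply mul_le_mul_of_nonneg_left _ (abs_nonneg c3)
                apply mul_le_mul_of_nonneg_right _ h03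
                exact mul_le_mul_of_nonneg_left hbnd (by positivity)
            _ = |c3| * R ^ (-(α1 + α2 - 1)) * C1 * ((R*u) ^ (α1 + α2 - 1)
                  * (1 - R*u) ^ (β2 - 1)) := by ring
      rw [setLIntegral_congr_fun measurableSet_Ioo (
        fun u hu => by rw [hEq u hu]),
        ← ofReal_integral_eq_lintegral_ofReal hIk1 ?_]
      swap
      · rw [Filter.EventuallyLE, ae_restrict_iff' measurableSet_Ioo]
        refine Filter.Eventually.of_forall fun u hu => ?_
        have h1 : (0:ℝ) < u := hu.1
        have h2 : (0:ℝ) < 1 - u := by nlinarith [hu.2]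
        have h3 : (0:ℝ) < 1 - R * u := by nlinarith [(lt_div_iff₀ hR0).mp hu.2]
        have hc30 : 0 ≤ c3 := by rw [hc3]; positivity
        simp only [Pi.zero_apply, hk1]
        positivity
      -- change of variables u = v / R
      congr 1
      have e1 : ∫ u in Set.Ioo (0:ℝ) (1/R), c3 * k1 u
          = ∫ u in (0:ℝ)..(1/R), c3 * k1 u := by
        rw [intervalIntegral.integral_of_le hinv.le, integral_Ioc_eq_integral_Ioo]
      have e2 := intervalIntegral.integral_comp_div (a := (0:ℝ)) (b := (1:ℝ))
        (f := fun u => c3 * k1 u) hR0.ne'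
      rw [zero_div] at e2
      have e2' : (∫ x in (0:ℝ)..(1:ℝ), c3 * k1 (x / R))
          = R • ∫ x in (0:ℝ)..(1/R), c3 * k1 x := e2
      have e3 : ∫ u in (0:ℝ)..(1/R), c3 * k1 u
          = R⁻¹ • ∫ x in (0:ℝ)..(1:ℝ), c3 * k1 (x / R) := by
        rw [e2', ← smul_assoc]
        norm_num [smul_eq_mul, inv_mul_cancel₀ hR0.ne']
      have e4 : ∫ x in (0:ℝ)..(1:ℝ), c3 * k1 (x / R) = ∫ x in Set.Ioo (0:ℝ) 1, c3 * k1 (x / R) := by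
        rw [intervalIntegral.integral_of_le (by norm_num : (0:ℝ) ≤ 1), integral_Ioc_eq_integral_Ioo]
      have e5 : ∫ x in Set.Ioo (0:ℝ) 1, c3 * k1 (x / R) = ∫ x in Set.Ioo (0:ℝ) 1, (R * c2) * k2 x := by
        refine setIntegral_congr_fun measurableSet_Ioo fun v hv => ?_
        have := algebra2 (α1 := α1) (β1 := β1) (α2 := α2) (β2 := β2) hv.1 hR0
        simpa [hk1, hk2, hc3, hc2, mul_assoc] using this
      rw [e1, e3, e4, e5, integral_const_mul, smul_eq_mul]
      field_simp
end Dens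

lemma lint_scale {u : ℝ} (hu : 0 < u) {h : ℝ → ℝ≥0∞} (hm : Measurable h) :
    ∫⁻ v, h v = ENNReal.ofReal u * ∫⁻ R, h (u * R) := by
  have : ∫⁻ R, h (u * R) = ∫⁻ v, h v ∂(Measure.map (fun x => u * x) volume) := by
    rw [lintegral_map hm (measurable_const_mul u)]
  rw [this, Real.map_volume_mul_left hu.ne', lintegral_smul_measure, smul_eq_mul, ← mul_assoc,
    ← ENNReal.ofReal_mul hu.le, abs_of_pos (by positivity), mul_inv_cancel₀ hu.ne',
    ENNReal.ofReal_one, one_mul]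

theorem map_div_eq_withDensity_dens
    {Ω : Type*} [MeasurableSpace Ω] (μ : Measure Ω) [IsProbabilityMeasure μ]
    (α1 β1 α2 β2 : ℝ)
    (U V : Ω → ℝ) (hU : Measurable U) (hV : Measurable V)
    (hindep : IndepFun U V μ)
    (hUlaw : Measure.map U μ = betaLaw α1 β1)
    (hVlaw : Measure.map V μ = betaLaw α2 β2) :
    Measure.map (fun ω => V ω / U ω) μ = volume.withDensity (dens α1 β1 α2 β2) := by
  have hbeta : ∀ a b, betaLaw a b = volume.withDensity (fun x => ENNReal.ofReal (bd a b x)) :=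
    fun a b => rfl
  have mF : Measurable fun u => ENNReal.ofReal (bd α1 β1 u) :=
    (measurable_bd _ _).ennreal_ofReal
  have mG : Measurable fun v => ENNReal.ofReal (bd α2 β2 v) :=
    (measurable_bd _ _).ennreal_ofReal
  haveI hsf1 : SFinite (betaLaw α1 β1) := by rw [hbeta]; infer_instance
  haveI hsf2 : SFinite (betaLaw α2 β2) := by rw [hbeta]; infer_instance
  ext s hs
  have hT : MeasurableSet ((fun p : ℝ × ℝ => p.2 / p.1) ⁻¹' s) :=
    (measurable_snd.div measurable_fst) hs
  have mInd : Measurable (s.indicator (1 : ℝ → ℝ≥0∞)) := measurable_one.indicator hs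
  rw [Measure.map_apply (f := fun ω => V ω / U ω) (hV.div hU) hs,
    show (fun ω => V ω / U ω) ⁻¹' s
      = (fun ω => (U ω, V ω)) ⁻¹' ((fun p : ℝ × ℝ => p.2 / p.1) ⁻¹' s) from rfl,
    ← Measure.map_apply (hU.prodMk hV) hT,
    (indepFun_iff_map_prod_eq_prod_map_map hU.aemeasurable hV.aemeasurable).mp hindep,
    hUlaw, hVlaw]
  rw [← lintegral_indicator_one hT,
    lintegral_prod _ ((measurable_one.indicator hT)).aemeasurable]
  have hind : ∀ u v : ℝ, ((fun p : ℝ × ℝ => p.2 / p.1) ⁻¹' s).indicator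
      (1 : ℝ × ℝ → ℝ≥0∞) (u, v) = s.indicator 1 (v / u) := by
    intro u v
    by_cases h : v / u ∈ s
    · rw [Set.indicator_of_mem h, Set.indicator_of_mem (by exact h)]; rfl
    · rw [Set.indicator_of_notMem h, Set.indicator_of_notMem (by exact h)]
  -- inner integral over v, for each u
  have inner_meas : ∀ u : ℝ, Measurable fun v : ℝ =>
      ENNReal.ofReal (bd α2 β2 v) * s.indicator 1 (v / u) :=
    fun u => mG.mul (mInd.comp (measurable_id.div_const u))
  have step1 : (∫⁻ u, ∫⁻ v, ((fun p : ℝ × ℝ => p.2 / p.1) ⁻¹' s).indicator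
        (1 : ℝ × ℝ → ℝ≥0∞) (u, v) ∂(betaLaw α2 β2) ∂(betaLaw α1 β1))
      = ∫⁻ u, ENNReal.ofReal (bd α1 β1 u) *
          ∫⁻ v, ENNReal.ofReal (bd α2 β2 v) * s.indicator 1 (v / u) ∂volume ∂volume := by
    have inner_eq : ∀ u : ℝ, (∫⁻ v, ((fun p : ℝ × ℝ => p.2 / p.1) ⁻¹' s).indicator
        (1 : ℝ × ℝ → ℝ≥0∞) (u, v) ∂(betaLaw α2 β2))
        = ∫⁻ v, ENNReal.ofReal (bd α2 β2 v) * s.indicator 1 (v / u) ∂volume := by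
      intro u
      have hg : Measurable fun v : ℝ => s.indicator (1 : ℝ → ℝ≥0∞) (v / u) :=
        mInd.comp (measurable_id.div_const u)
      calc (∫⁻ v, ((fun p : ℝ × ℝ => p.2 / p.1) ⁻¹' s).indicator
            (1 : ℝ × ℝ → ℝ≥0∞) (u, v) ∂(betaLaw α2 β2))
          = ∫⁻ v, s.indicator 1 (v / u) ∂(betaLaw α2 β2) :=
            lintegral_congr fun v => hind u v
        _ = ∫⁻ v, ENNReal.ofReal (bd α2 β2 v) * s.indicator 1 (v / u) ∂volume := by
            rw [hbeta α2 β2, lintegral_withDensity_eq_lintegral_mul _ mG hg]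
            exact lintegral_congr fun v => rfl
    have houter : Measurable fun u : ℝ =>
        ∫⁻ v, ENNReal.ofReal (bd α2 β2 v) * s.indicator 1 (v / u) ∂volume := by
      have : Measurable fun q : ℝ × ℝ =>
          ENNReal.ofReal (bd α2 β2 q.2) * s.indicator 1 (q.2 / q.1) :=
        (mG.comp measurable_snd).mul (mInd.comp (measurable_snd.div measurable_fst))
      exact Measurable.lintegral_prod_right' this
    calc (∫⁻ u, ∫⁻ v, ((fun p : ℝ × ℝ => p.2 / p.1) ⁻¹' s).indicator
          (1 : ℝ × ℝ → ℝ≥0∞) (u, v) ∂(betaLaw α2 β2) ∂(betaLaw α1 β1))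
        = ∫⁻ u, ∫⁻ v, ENNReal.ofReal (bd α2 β2 v) * s.indicator 1 (v / u) ∂volume
            ∂(betaLaw α1 β1) := lintegral_congr fun u => inner_eq u
      _ = ∫⁻ u, ENNReal.ofReal (bd α1 β1 u) *
            ∫⁻ v, ENNReal.ofReal (bd α2 β2 v) * s.indicator 1 (v / u) ∂volume ∂volume := by
          rw [hbeta α1 β1, lintegral_withDensity_eq_lintegral_mul _ mF houter]
          exact lintegral_congr fun u => rfl
  rw [step1]
  -- change variables in the inner integral
  have mΦ : Measurable fun q : ℝ × ℝ =>
      ENNReal.ofReal (bd α1 β1 q.1) * ENNReal.ofReal q.1 *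
        ENNReal.ofReal (bd α2 β2 (q.1 * q.2)) * s.indicator 1 q.2 :=
    (((mF.comp measurable_fst).mul (ENNReal.measurable_ofReal.comp measurable_fst)).mul
      (mG.comp (measurable_fst.mul measurable_snd))).mul (mInd.comp measurable_snd)
  have step2 : (∫⁻ u, ENNReal.ofReal (bd α1 β1 u) *
        ∫⁻ v, ENNReal.ofReal (bd α2 β2 v) * s.indicator 1 (v / u) ∂volume ∂volume)
      = ∫⁻ u, ∫⁻ R, ENNReal.ofReal (bd α1 β1 u) * ENNReal.ofReal u *
          ENNReal.ofReal (bd α2 β2 (u * R)) * s.indicator 1 R ∂volume ∂volume := by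
    refine lintegral_congr fun u => ?_
    by_cases hu : u ∈ Set.Ioo (0:ℝ) 1
    · have h0 : (0:ℝ) < u := hu.1
      rw [lint_scale h0 (inner_meas u)]
      have : ∀ R : ℝ, ENNReal.ofReal (bd α2 β2 (u * R)) * s.indicator 1 ((u * R) / u)
          = ENNReal.ofReal (bd α2 β2 (u * R)) * s.indicator 1 R := by
        intro R; rw [mul_div_cancel_left₀ _ h0.ne']
      rw [← mul_assoc]
      rw [show ENNReal.ofReal (bd α1 β1 u) * ENNReal.ofReal u *
          ∫⁻ R, ENNReal.ofReal (bd α2 β2 (u * R)) * s.indicator 1 (u * R / u) ∂volume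
        = ∫⁻ R, ENNReal.ofReal (bd α1 β1 u) * ENNReal.ofReal u *
            (ENNReal.ofReal (bd α2 β2 (u * R)) * s.indicator 1 (u * R / u)) ∂volume from
        (lintegral_const_mul _ ((mG.comp (measurable_const_mul u)).mul
          (mInd.comp ((measurable_const_mul u).div_const u)))).symm]
      refine lintegral_congr fun R => ?_
      rw [mul_div_cancel_left₀ _ h0.ne']; ring
    · have hz : bd α1 β1 u = 0 := Set.indicator_of_notMem hu _
      simp [hz]
  rw [step2]
  rw [lintegral_lintegral_swap mΦ.aemeasurable]
  have step3 : (∫⁻ R, ∫⁻ u, ENNReal.ofReal (bd α1 β1 u) * ENNReal.ofReal u *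
        ENNReal.ofReal (bd α2 β2 (u * R)) * s.indicator 1 R ∂volume ∂volume)
      = ∫⁻ R, s.indicator (dens α1 β1 α2 β2) R ∂volume := by
    refine lintegral_congr fun R => ?_
    have hgu : Measurable fun u : ℝ => ENNReal.ofReal (bd α1 β1 u) * ENNReal.ofReal u *
        ENNReal.ofReal (bd α2 β2 (u * R)) :=
      (mF.mul ENNReal.measurable_ofReal).mul (mG.comp (measurable_mul_const R))
    rw [lintegral_mul_const _ hgu]
    by_cases h : R ∈ s
    · rw [Set.indicator_of_mem h, Set.indicator_of_mem h, Pi.one_apply, mul_one]; rfl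
    · rw [Set.indicator_of_notMem h, Set.indicator_of_notMem h, mul_zero]
  rw [step3, lintegral_indicator hs, withDensity_apply _ hs]

end Aux

/-- The density of the ratio `R = V/U` of independent Beta random variables
`U ~ Beta(α1,β1)`, `V ~ Beta(α2,β2)`: for `0 < R ≤ 1` it is
`R^{α2-1}/(B(α1,β1)B(α2,β2)) ∫₀¹ u^{α1+α2-1}(1-u)^{β1-1}(1-Ru)^{β2-1} du`,
and for `R > 1` it is
`R^{-(α1+1)}/(B(α1,β1)B(α2,β2)) ∫₀¹ v^{α1+α2-1}(1-v)^{β2-1}(1-v/R)^{β1-1} dv`.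
This is the posterior of the risk ratio in Dallal's model under the reference prior. -/
theorem density_of_ratio_of_independent_betas
    {Ω : Type*} [MeasurableSpace Ω] (μ : Measure Ω) [IsProbabilityMeasure μ]
    (α1 β1 α2 β2 : ℝ) (hα1 : 0 < α1) (hβ1 : 0 < β1) (hα2 : 0 < α2) (hβ2 : 0 < β2)
    (U V : Ω → ℝ) (hU : Measurable U) (hV : Measurable V)
    (hindep : IndepFun U V μ)
    (hUlaw : Measure.map U μ = betaLaw α1 β1)
    (hVlaw : Measure.map V μ = betaLaw α2 β2) :
    Measure.map (fun ω => V ω / U ω) μ =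
      volume.withDensity (fun R => ENNReal.ofReal
        (Set.indicator (Set.Ioi (0 : ℝ))
          (fun R =>
            if R ≤ 1 then
              R ^ (α2 - 1) / (betaFn α1 β1 * betaFn α2 β2) *
                ∫ u in Set.Ioo (0 : ℝ) 1,
                  u ^ (α1 + α2 - 1) * (1 - u) ^ (β1 - 1) * (1 - R * u) ^ (β2 - 1)
            else
              R ^ (-(α1 + 1)) / (betaFn α1 β1 * betaFn α2 β2) *
                ∫ v in Set.Ioo (0 : ℝ) 1,
                  v ^ (α1 + α2 - 1) * (1 - v) ^ (β2 - 1) * (1 - v / R) ^ (β1 - 1)) R)) := by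
  rw [map_div_eq_withDensity_dens μ α1 β1 α2 β2 U V hU hV hindep hUlaw hVlaw]
  refine withDensity_congr_ae ?_
  have h1 : ∀ᵐ R : ℝ, R ≠ (1:ℝ) := by
    rw [MeasureTheory.ae_iff]
    simp only [ne_eq, not_not, Set.setOf_eq_eq_singleton]
    exact Real.volume_singleton
  exact h1.mono fun R hR => dens_eq hα1 hβ1 hα2 hβ2 hR
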